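/- Let A and B be topological commutative rings, let θ : A → Â be the canonical map to the completion of A, and let φ : A → B be a continuous ring homomorphism. Assume: (1) there exists a continuous ring homomorphism ψ : B → Â such that θ = ψ ∘ φ; (2) for every neighbourhood V of 0 in B there exists a neighbourhood W of 0 in Â such that ψ⁻¹(W) ⊆ V. Then the induced continuous ring homomorphism φ̂ : Â → B̂ between the completions is bijective and is an open map; in particular, φ̂ is an isomorphism of topological rings. -/

import Mathlib

open Filter Topology

theorem statement13 {A B : Type*}
    [CommRing A] [UniformSpace A] [IsUniformAddGroup A] [IsTopologicalRing A]
    [CommRing B] [UniformSpace B] [IsUniformAddGroup B] [IsTopologicalRing B]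
    (φ : A →+* B) (hφ : Continuous ⇑φ)
    (ψ : B →+* UniformSpace.Completion A) (hψ : Continuous ⇑ψ)
    (hcomp : (UniformSpace.Completion.coeRingHom : A →+* UniformSpace.Completion A)
        = ψ.comp φ)
    (hnbhd : ∀ V ∈ 𝓝 (0 : B), ∃ W ∈ 𝓝 (0 : UniformSpace.Completion A), ⇑ψ ⁻¹' W ⊆ V) :
    Function.Bijective ⇑(UniformSpace.Completion.mapRingHom φ hφ) ∧
      IsOpenMap ⇑(UniformSpace.Completion.mapRingHom φ hφ) := by
  classical
  set Φ := UniformSpace.Completion.mapRingHom φ hφ with hΦdef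
  set Ψ := UniformSpace.Completion.extensionHom ψ hψ with hΨdef
  have hΦc : Continuous ⇑Φ := UniformSpace.Completion.continuous_extension
  have hΨc : Continuous ⇑Ψ := UniformSpace.Completion.continuous_extension
  have hψφ : ⇑ψ ∘ ⇑φ = ((↑) : A → UniformSpace.Completion A) := by
    rw [← RingHom.coe_comp, ← hcomp]; rfl
  have hψφ' : ∀ a : A, ψ (φ a) = (a : UniformSpace.Completion A) := fun a =>
    congrFun hψφ a
  have hΦcoe : ∀ a : A, Φ (a : UniformSpace.Completion A) = ((φ a : B) : UniformSpace.Completion B) := fun a =>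
    UniformSpace.Completion.extensionHom_coe _ _ a
  have hΨcoe : ∀ b : B, Ψ (b : UniformSpace.Completion B) = ψ b := fun b =>
    UniformSpace.Completion.extensionHom_coe _ _ b
  -- Ψ ∘ Φ = id
  have hΨΦ : ∀ x : UniformSpace.Completion A, Ψ (Φ x) = x := by
    intro x
    refine UniformSpace.Completion.induction_on x ?_ ?_
    · exact isClosed_eq (hΨc.comp hΦc) continuous_id
    · intro a
      rw [hΦcoe, hΨcoe, hψφ']
  -- comap of the zero neighbourhood filter
  have hcom : comap ⇑ψ (𝓝 (0 : UniformSpace.Completion A)) = 𝓝 (0 : B) := by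
    refine le_antisymm (fun V hV => ?_) ?_
    · rcases hnbhd V hV with ⟨W, hW, hWV⟩
      exact mem_of_superset (preimage_mem_comap hW) hWV
    · have h := hψ.tendsto 0
      rw [map_zero] at h
      exact tendsto_iff_comap.mp h
  -- ψ is uniform inducing
  have hui : IsUniformInducing ⇑ψ := by
    constructor
    have hfe : ((fun x : UniformSpace.Completion A × UniformSpace.Completion A => x.2 - x.1)
          ∘ fun p : B × B => (ψ p.1, ψ p.2)) = ⇑ψ ∘ fun p : B × B => p.2 - p.1 := by
      funext p
      simp [map_sub]
    rw [uniformity_eq_comap_nhds_zero (UniformSpace.Completion A), comap_comap, hfe,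
      ← comap_comap, hcom, ← uniformity_eq_comap_nhds_zero]
  -- φ has dense range
  have hdφ : DenseRange ⇑φ := by
    have h2 : ⇑ψ '' Set.range ⇑φ = Set.range ((↑) : A → UniformSpace.Completion A) := by
      rw [← Set.range_comp, hψφ]
    have key : closure (Set.range ⇑φ) = Set.univ := by
      rw [hui.isInducing.closure_eq_preimage_closure_image, h2,
        (UniformSpace.Completion.denseRange_coe (α := A)).closure_range, Set.preimage_univ]
    rw [DenseRange, dense_iff_closure_eq, key]
  have hd : DenseRange (((↑) : B → UniformSpace.Completion B) ∘ ⇑φ) :=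
    (UniformSpace.Completion.denseRange_coe (α := B)).comp hdφ
      (UniformSpace.Completion.continuous_coe B)
  -- Φ ∘ Ψ = id
  have hΦΨfun : ⇑Φ ∘ ⇑Ψ = id := by
    refine hd.equalizer (hΦc.comp hΨc) continuous_id ?_
    funext a
    simp only [Function.comp_apply, id_eq]
    rw [hΨcoe, hψφ', hΦcoe]
  have hΦΨ : ∀ y : UniformSpace.Completion B, Φ (Ψ y) = y := fun y => congrFun hΦΨfun y
  have himg : ∀ U : Set (UniformSpace.Completion A), ⇑Φ '' U = ⇑Ψ ⁻¹' U := by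
    intro U
    ext y
    constructor
    · rintro ⟨x, hx, rfl⟩
      simpa [hΨΦ x] using hx
    · intro hy
      exact ⟨Ψ y, hy, hΦΨ y⟩
  refine ⟨⟨Function.LeftInverse.injective hΨΦ, fun y => ⟨Ψ y, hΦΨ y⟩⟩, ?_⟩
  intro U hU
  rw [himg]
  exact hU.preimage hΨc
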